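/- Let d ≥ 2 and 0 < ε ≤ 1, and let f : ℝ^{d−1} → ℝ be a C¹ function with sup_{x'} |∇f(x')| ≤ ε. Let w : ℝ^d → ℂ be Lipschitz with compact support, and define v on Ω_f := {(x',x_d) ∈ ℝ^{d−1}×ℝ : x_d > f(x')} by v(x',x_d) := w(x', x_d − f(x')). Then v is Lipschitz on Ω_f and there is a constant C > 0 depending only on d such that | ∫_{Ω_f} |∇v(x)|² dx − ∫_{ℝ^d_+} |∇w(y)|² dy | ≤ C·ε·∫_{ℝ^d_+} |∇w(y)|² dy, where ℝ^d_+ := {(y',y_d) : y_d > 0} and the gradients (which exist almost everywhere) are integrated with respect to Lebesgue measure. -/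

import Mathlib

open MeasureTheory Real Filter Metric Asymptotics
open scoped ENNReal NNReal Topology ComplexConjugate

noncomputable section

/-- `ℝ^d` as a Euclidean space. -/
abbrev Euc (d : ℕ) : Type := EuclideanSpace ℝ (Fin d)

/-- `ω_k`, the Lebesgue measure of the unit ball in `ℝ^k`. -/
def ballVol (k : ℕ) : ℝ := (volume (Metric.ball (0 : Euc k) 1)).toReal

/-- The semiclassical constant `L¹_k = (2/(k+2))·(2π)^{-k}·ω_k`. -/
def weylL1 (k : ℕ) : ℝ := (2 / ((k : ℝ) + 2)) * (2 * π) ^ (-(k : ℝ)) * ballVol k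

/-- `|𝕊^{d-2}|`, the surface measure of the unit sphere in `ℝ^{d-1}`. -/
def sphereArea (d : ℕ) : ℝ := (μH[(d : ℝ) - 2] (Metric.sphere (0 : Euc (d - 1)) 1)).toReal

/-- The constant `C_d = 4·|𝕊^{d-2}|·(2π)^{-d}·(d²-1)⁻¹`. -/
def constCd (d : ℕ) : ℝ := 4 * sphereArea d * (2 * π) ^ (-(d : ℝ)) * ((d : ℝ) ^ 2 - 1)⁻¹

/-- Negative part `x₋ = max(-x,0)`. -/
def nPart (x : ℝ) : ℝ := max (-x) 0

/-- The boundary coefficient `L²_d(b)`. -/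
def weylL2 (d : ℕ) (b : ℝ) : ℝ :=
  if 0 < b then
    constCd d * (-(π / 4) +
      ∫ p in (0 : ℝ)..1, (1 - p ^ 2) ^ (((d : ℝ) + 1) / 2) * b / (b ^ 2 + p ^ 2))
  else if b = 0 then constCd d * (π / 4)
  else
    constCd d * (-(π / 4) +
      (∫ p in (0 : ℝ)..1, (1 - p ^ 2) ^ (((d : ℝ) + 1) / 2) * b / (b ^ 2 + p ^ 2)) +
      π * (b ^ 2 + 1) ^ (((d : ℝ) + 1) / 2))

/-- First `d-1` coordinates `x'` of `x ∈ ℝ^d`. -/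
def firstCoords (d : ℕ) (x : Euc d) : Euc (d - 1) :=
  WithLp.toLp 2 (fun (i : Fin (d - 1)) => x (Fin.castLE (Nat.sub_le d 1) i))

/-- Last coordinate `x_d` of `x ∈ ℝ^d`. -/
def lastCoord (d : ℕ) (x : Euc d) : ℝ :=
  if h : 0 < d then x ⟨d - 1, Nat.sub_lt h Nat.one_pos⟩ else 0

/-- The point `(x',0) ∈ ℝ^d` corresponding to `x' ∈ ℝ^{d-1}`. -/
def embedBdry (d : ℕ) (x' : Euc (d - 1)) : Euc d :=
  WithLp.toLp 2 (fun (i : Fin d) => if h : (i : ℕ) < d - 1 then x' ⟨(i : ℕ), h⟩ else 0)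

/-- The open region above the graph of `f : ℝ^{d-1} → ℝ`. -/
def upperGraph (d : ℕ) (f : Euc (d - 1) → ℝ) : Set (Euc d) :=
  {x | f (firstCoords d x) < lastCoord d x}

/-- The upper half-space `ℝ^d_+`. -/
def upperHalf (d : ℕ) : Set (Euc d) := {x | 0 < lastCoord d x}

/-- The boundary-straightening map `(x',x_d) ↦ (x', x_d - f(x'))`. -/
def straighten (d : ℕ) (f : Euc (d - 1) → ℝ) (x : Euc d) : Euc d :=
  WithLp.toLp 2 (fun (i : Fin d) => if (i : ℕ) < d - 1 then x i else x i - f (firstCoords d x))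

/-- `Ω` has `C¹` boundary with modulus of continuity `ω` for the gradients of the local charts:
at every boundary point there is an orthonormal coordinate system (an affine isometry `A`
centered at `x₀`), a radius `r > 0` and a `C¹` graph function `f` with `f 0 = 0`, `∇f(0) = 0`,
whose gradient has modulus of continuity `ω`, representing `Ω` locally as the region above
the graph of `f`. -/
def IsC1BoundaryWith (d : ℕ) (Ω : Set (Euc d)) (ω : ℝ → ℝ) : Prop :=
  ∀ x₀ ∈ frontier Ω, ∃ (A : Euc d ≃ᵃⁱ[ℝ] Euc d) (r : ℝ) (f : Euc (d - 1) → ℝ),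
    A 0 = x₀ ∧ 0 < r ∧ ContDiff ℝ 1 f ∧ f 0 = 0 ∧ fderiv ℝ f 0 = 0 ∧
    (∀ x' y', ‖fderiv ℝ f x' - fderiv ℝ f y'‖ ≤ ω (dist x' y')) ∧
    Ω ∩ Metric.ball x₀ r = (A '' upperGraph d f) ∩ Metric.ball x₀ r

/-- `Ω` has uniform `C¹` boundary: there is a common modulus of continuity, vanishing at `0`,
for the gradients of all local charts. -/
def HasC1Boundary (d : ℕ) (Ω : Set (Euc d)) : Prop :=
  ∃ ω : ℝ → ℝ, Monotone ω ∧ Tendsto ω (𝓝[>] (0 : ℝ)) (𝓝 0) ∧ IsC1BoundaryWith d Ω ω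

/-- `Ω` has Lipschitz boundary. -/
def HasLipschitzBoundary (d : ℕ) (Ω : Set (Euc d)) : Prop :=
  ∀ x₀ ∈ frontier Ω, ∃ (A : Euc d ≃ᵃⁱ[ℝ] Euc d) (r : ℝ) (f : Euc (d - 1) → ℝ) (K : ℝ≥0),
    A 0 = x₀ ∧ 0 < r ∧ LipschitzWith K f ∧
    Ω ∩ Metric.ball x₀ r = (A '' upperGraph d f) ∩ Metric.ball x₀ r

/-- `|∇w|²` for a complex-valued function `w`, i.e. `|∇(Re w)|² + |∇(Im w)|²`. -/
def gradSqC (d : ℕ) (w : Euc d → ℂ) (x : Euc d) : ℝ :=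
  ‖gradient (fun y => (w y).re) x‖ ^ 2 + ‖gradient (fun y => (w y).im) x‖ ^ 2

/-- `Tr(H(b))₋`: the variational trace of the negative part of the Robin operator
`h²(-Δ) - 1` on `Ω` with boundary coefficient `b`. -/
def robinTrace (d : ℕ) (Ω : Set (Euc d)) (b : Euc d → ℝ) (h : ℝ) : ℝ :=
  sSup {T : ℝ | ∃ (N : ℕ) (v : Fin N → Euc d → ℂ),
    (∀ j, ContDiff ℝ 1 (v j)) ∧
    (∀ j k, (∫ x in Ω, conj (v j x) * v k x) = if j = k then 1 else 0) ∧
    T = ∑ j, ((∫ x in Ω, ‖v j x‖ ^ 2)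
        - h ^ 2 * (∫ x in Ω, gradSqC d (v j) x)
        - h * (∫ x in frontier Ω, b x * ‖v j x‖ ^ 2 ∂(μH[(d : ℝ) - 1])))}

/-- `Tr(φ H(b) φ)₋`: variational trace of the localized Robin operator on `Ω`. -/
def locTrace (d : ℕ) (Ω : Set (Euc d)) (b : Euc d → ℝ) (φ : Euc d → ℝ) (h : ℝ) : ℝ :=
  sSup {T : ℝ | ∃ (N : ℕ) (v : Fin N → Euc d → ℂ),
    (∀ j, ContDiff ℝ 1 (v j)) ∧
    (∀ j k, (∫ x in Ω, conj (v j x) * v k x) = if j = k then 1 else 0) ∧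
    T = ∑ j, ((∫ x in Ω, φ x ^ 2 * ‖v j x‖ ^ 2)
        - h ^ 2 * (∫ x in Ω, gradSqC d (fun y => (φ y : ℂ) * v j y) x)
        - h * (∫ x in frontier Ω,
            b x * (φ x ^ 2 * ‖v j x‖ ^ 2) ∂(μH[(d : ℝ) - 1])))}

/-- `Tr(φ(-Δ_b - Λ)φ)₋`: variational trace of the localized Robin operator at energy `Λ`. -/
def locTraceL (d : ℕ) (Ω : Set (Euc d)) (b : Euc d → ℝ) (φ : Euc d → ℝ) (Λ : ℝ) : ℝ :=
  sSup {T : ℝ | ∃ (N : ℕ) (v : Fin N → Euc d → ℂ),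
    (∀ j, ContDiff ℝ 1 (v j)) ∧
    (∀ j k, (∫ x in Ω, conj (v j x) * v k x) = if j = k then 1 else 0) ∧
    T = ∑ j, (Λ * (∫ x in Ω, φ x ^ 2 * ‖v j x‖ ^ 2)
        - (∫ x in Ω, gradSqC d (fun y => (φ y : ℂ) * v j y) x)
        - (∫ x in frontier Ω,
            b x * (φ x ^ 2 * ‖v j x‖ ^ 2) ∂(μH[(d : ℝ) - 1])))}

/-- `Tr(φ(-h²Δ-1)φ)₋` on all of `ℝ^d` (no boundary). -/
def freeTrace (d : ℕ) (φ : Euc d → ℝ) (h : ℝ) : ℝ :=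
  sSup {T : ℝ | ∃ (N : ℕ) (v : Fin N → Euc d → ℂ),
    (∀ j, ContDiff ℝ 1 (v j)) ∧
    (∀ j k, (∫ x, conj (v j x) * v k x) = if j = k then 1 else 0) ∧
    T = ∑ j, ((∫ x, φ x ^ 2 * ‖v j x‖ ^ 2)
        - h ^ 2 * (∫ x, gradSqC d (fun y => (φ y : ℂ) * v j y) x))}

/-- `Tr(φ H⁺(b) φ)₋`: variational trace of the localized Robin operator on the half-space. -/
def halfTrace (d : ℕ) (b : ℝ) (φ : Euc d → ℝ) (h : ℝ) : ℝ :=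
  sSup {T : ℝ | ∃ (N : ℕ) (v : Fin N → Euc d → ℂ),
    (∀ j, ContDiff ℝ 1 (v j)) ∧
    (∀ j k, (∫ x in upperHalf d, conj (v j x) * v k x) = if j = k then 1 else 0) ∧
    T = ∑ j, ((∫ x in upperHalf d, φ x ^ 2 * ‖v j x‖ ^ 2)
        - h ^ 2 * (∫ x in upperHalf d, gradSqC d (fun y => (φ y : ℂ) * v j y) x)
        - h * b * (∫ x' : Euc (d - 1),
            φ (embedBdry d x') ^ 2 * ‖v j (embedBdry d x')‖ ^ 2))}

/-- The generalized eigenfunction `ψ_b(t)`. -/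
def psiF (b t : ℝ) : ℝ := (Real.cos t + b * Real.sin t) / Real.sqrt (1 + b ^ 2)

/-- The bound state `Ψ_b(t)` (vanishing for `b ≥ 0`). -/
def psiBig (b t : ℝ) : ℝ := if b < 0 then Real.sqrt (-2 * b) * Real.exp (b * t) else 0

/-- The function `I_b(t)`. -/
def Ifun (d : ℕ) (b t : ℝ) : ℝ :=
  ∫ p in (0 : ℝ)..1, (1 - p ^ 2) ^ (((d : ℝ) + 1) / 2) *
    ((p ^ 2 - b ^ 2) / (p ^ 2 + b ^ 2) * Real.cos (2 * t * p) +
      2 * p * b / (p ^ 2 + b ^ 2) * Real.sin (2 * t * p))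

/-- The localization scale `l(u) = ½(1 + (dist(u,Ωᶜ)² + l₀²)^{-1/2})⁻¹`. -/
def radFun (d : ℕ) (Ω : Set (Euc d)) (l₀ : ℝ) (u : Euc d) : ℝ :=
  (1 / 2) * (1 + (Real.sqrt (Metric.infDist u Ωᶜ ^ 2 + l₀ ^ 2))⁻¹)⁻¹

end
noncomputable section StraightenAux

namespace StraightenAux

open MeasureTheory Real

variable {d : ℕ}

def lastIdx (hd : 2 ≤ d) : Fin d := ⟨d - 1, by omega⟩

lemma lastIdx_val (hd : 2 ≤ d) : ((lastIdx hd : Fin d) : ℕ) = d - 1 := rfl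

lemma not_lastIdx_lt (hd : 2 ≤ d) : ¬ ((lastIdx hd : Fin d) : ℕ) < d - 1 := by
  rw [lastIdx_val]; omega

def P (d : ℕ) : Euc d →L[ℝ] Euc (d - 1) :=
  LinearMap.toContinuousLinearMap
    { toFun := firstCoords d
      map_add' := fun _ _ => rfl
      map_smul' := fun _ _ => by ext; simp [firstCoords] }

lemma P_apply (x : Euc d) : P d x = firstCoords d x := by simp [P]; rfl

lemma norm_P_le (x : Euc d) : ‖P d x‖ ≤ ‖x‖ := by
  rw [EuclideanSpace.norm_eq, EuclideanSpace.norm_eq]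
  apply Real.sqrt_le_sqrt
  have h : ∑ i : Fin (d - 1), ‖(P d x) i‖ ^ 2
      = ∑ j ∈ Finset.univ.map (Fin.castLEEmb (Nat.sub_le d 1)), ‖x j‖ ^ 2 := by
    rw [Finset.sum_map]; simp [P_apply, firstCoords]
  rw [h]
  exact Finset.sum_le_sum_of_subset_of_nonneg (Finset.subset_univ _)
    (fun j _ _ => by positivity)

def Ed (hd : 2 ≤ d) : Euc d := EuclideanSpace.single (lastIdx hd) 1

lemma Ed_apply (hd : 2 ≤ d) (i : Fin d) :
    Ed hd i = if i = lastIdx hd then 1 else 0 := EuclideanSpace.single_apply _ _ _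

lemma norm_Ed (hd : 2 ≤ d) : ‖Ed hd‖ = 1 := by
  simp [Ed, EuclideanSpace.norm_single]

lemma P_Ed (hd : 2 ≤ d) : P d (Ed hd) = 0 := by
  ext i
  have hne : (Fin.castLE (Nat.sub_le d 1) i) ≠ lastIdx hd := by
    intro h
    have h2 := congrArg Fin.val h
    have h3 := i.isLt
    simp [lastIdx] at h2
    omega
  simp [P_apply, firstCoords, Ed, EuclideanSpace.single_apply, hne]

lemma firstCoords_straighten (f : Euc (d - 1) → ℝ) (x : Euc d) :
    firstCoords d (straighten d f x) = firstCoords d x := by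
  ext i
  have h : ((Fin.castLE (Nat.sub_le d 1) i : Fin d) : ℕ) < d - 1 := i.isLt
  simp [firstCoords, straighten, h]

lemma straighten_eq (hd : 2 ≤ d) (f : Euc (d - 1) → ℝ) (x : Euc d) :
    straighten d f x = x - f (P d x) • Ed hd := by
  ext i
  have hsub : (x - f (P d x) • Ed hd) i = x i - f (P d x) * Ed hd i := rfl
  rw [hsub, Ed_apply]
  by_cases h : (i : ℕ) < d - 1
  · have hne : i ≠ lastIdx hd := by
      intro he; rw [he] at h; simp [lastIdx] at h
    simp [straighten, h, hne]
  · have he : i = lastIdx hd := by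
      apply Fin.ext; have h2 := i.isLt; simp [lastIdx]; omega
    simp [straighten, he, P_apply, not_lastIdx_lt hd]

def SD (hd : 2 ≤ d) (f : Euc (d - 1) → ℝ) (x : Euc d) : Euc d →L[ℝ] Euc d :=
  ContinuousLinearMap.id ℝ (Euc d) -
    ((fderiv ℝ f (P d x)).comp (P d)).smulRight (Ed hd)

lemma hasFDerivAt_straighten (hd : 2 ≤ d) {f : Euc (d - 1) → ℝ} (hf : ContDiff ℝ 1 f)
    (x : Euc d) : HasFDerivAt (straighten d f) (SD hd f x) x := by
  have h1 : straighten d f = fun y => y - f (P d y) • Ed hd :=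
    funext fun y => straighten_eq hd f y
  rw [h1]
  exact (hasFDerivAt_id x).sub
    (((((hf.differentiable one_ne_zero) (P d x)).hasFDerivAt).comp x (P d).hasFDerivAt).smul_const
      (Ed hd))

lemma det_eq_one (hd : 2 ≤ d) (c : Euc d →L[ℝ] ℝ) (hc : c (Ed hd) = 0) :
    (ContinuousLinearMap.id ℝ (Euc d) - c.smulRight (Ed hd)).det = 1 := by
  classical
  set L := ContinuousLinearMap.id ℝ (Euc d) - c.smulRight (Ed hd) with hL
  show LinearMap.det (L : Euc d →ₗ[ℝ] Euc d) = 1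
  let b := (EuclideanSpace.basisFun (Fin d) ℝ).toBasis
  rw [← LinearMap.det_toMatrix b]
  have hM : ∀ i j, LinearMap.toMatrix b b (L : Euc d →ₗ[ℝ] Euc d) i j
      = (if i = j then 1 else 0) - c (EuclideanSpace.single j 1) * Ed hd i := by
    intro i j
    rw [LinearMap.toMatrix_apply]
    have hbj : b j = EuclideanSpace.single j 1 := by
      simp [b, EuclideanSpace.basisFun_apply]
    have hrepr : ∀ z : Euc d, b.repr z i = z i := by
      intro z; simp [b]
    rw [hbj, hrepr]
    have : L (EuclideanSpace.single j 1)
        = EuclideanSpace.single j 1 - c (EuclideanSpace.single j 1) • Ed hd := by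
      simp [hL]
    have hco : (L : Euc d →ₗ[ℝ] Euc d) (EuclideanSpace.single j 1)
        = L (EuclideanSpace.single j 1) := rfl
    rw [hco, this]
    have hsub : (EuclideanSpace.single j (1:ℝ) - c (EuclideanSpace.single j 1) • Ed hd) i
        = EuclideanSpace.single j (1:ℝ) i - c (EuclideanSpace.single j 1) * Ed hd i := rfl
    rw [hsub, EuclideanSpace.single_apply]
  have htri : (LinearMap.toMatrix b b (L : Euc d →ₗ[ℝ] Euc d)).BlockTriangular
      OrderDual.toDual := by
    intro i j hij
    have hij' : i < j := hij
    rw [hM]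
    have h1 : i ≠ j := ne_of_lt hij'
    have h2 : Ed hd i = 0 := by
      rw [Ed_apply]
      have : i ≠ lastIdx hd := by
        intro he
        have h3 := j.isLt
        have h4 : (i : ℕ) < (j : ℕ) := hij'
        have h5 := congrArg Fin.val he
        simp [lastIdx] at h5
        omega
      simp [this]
    simp [h1, h2]
  rw [Matrix.det_of_lowerTriangular _ htri]
  apply Finset.prod_eq_one
  intro i _
  rw [hM]
  by_cases hi : i = lastIdx hd
  · have : EuclideanSpace.single i (1:ℝ) = Ed hd := by rw [hi]; rfl
    rw [this, hc]
    simp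
  · have h2 : Ed hd i = 0 := by rw [Ed_apply]; simp [hi]
    simp [h2]

lemma det_SD (hd : 2 ≤ d) (f : Euc (d - 1) → ℝ) (x : Euc d) :
    (SD hd f x).det = 1 := by
  apply det_eq_one hd
  have h : P d (Ed hd) = 0 := P_Ed hd
  simp [ContinuousLinearMap.comp_apply, h]

lemma norm_SD_sub_id_le (hd : 2 ≤ d) {f : Euc (d - 1) → ℝ} {ε : ℝ}
    (hgrad : ∀ x', ‖fderiv ℝ f x'‖ ≤ ε) (x : Euc d) :
    ‖SD hd f x - ContinuousLinearMap.id ℝ (Euc d)‖ ≤ ε := by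
  have hε0 : 0 ≤ ε := le_trans (norm_nonneg _) (hgrad 0)
  apply ContinuousLinearMap.opNorm_le_bound _ hε0
  intro h
  have he : (SD hd f x - ContinuousLinearMap.id ℝ (Euc d)) h
      = -((fderiv ℝ f (P d x)) (P d h) • Ed hd) := by
    simp [SD]
  rw [he, norm_neg, norm_smul, norm_Ed hd, mul_one]
  calc ‖fderiv ℝ f (P d x) (P d h)‖
      ≤ ‖fderiv ℝ f (P d x)‖ * ‖P d h‖ := (fderiv ℝ f (P d x)).le_opNorm _
    _ ≤ ε * ‖h‖ := mul_le_mul (hgrad _) (norm_P_le _) (norm_nonneg _) hε0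

lemma straighten_straighten (f g : Euc (d - 1) → ℝ) (hfg : ∀ z, f z + g z = 0) (x : Euc d) :
    straighten d g (straighten d f x) = x := by
  ext i
  by_cases h : (i : ℕ) < d - 1
  · simp [straighten, h]
  · have h2 := hfg (firstCoords d x)
    have h3 := firstCoords_straighten f x
    simp only [straighten] at h3
    simp only [straighten, h3, if_neg h]
    linarith

lemma straighten_injective (f : Euc (d - 1) → ℝ) : Function.Injective (straighten d f) :=
  Function.LeftInverse.injective
    (g := straighten d (fun z => -f z))
    (fun x => straighten_straighten f (fun z => -f z) (fun z => by ring) x)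

lemma lastCoord_eq (hd : 2 ≤ d) (x : Euc d) : lastCoord d x = x (lastIdx hd) := by
  unfold lastCoord
  rw [dif_pos (show 0 < d by omega)]
  rfl

lemma lastCoord_straighten (hd : 2 ≤ d) (f : Euc (d - 1) → ℝ) (x : Euc d) :
    lastCoord d (straighten d f x) = lastCoord d x - f (firstCoords d x) := by
  rw [lastCoord_eq hd, lastCoord_eq hd]
  simp [straighten, not_lastIdx_lt hd]

lemma image_straighten (hd : 2 ≤ d) (f : Euc (d - 1) → ℝ) :
    straighten d f '' upperGraph d f = upperHalf d := by
  ext y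
  constructor
  · rintro ⟨x, hx, rfl⟩
    have h1 : lastCoord d (straighten d f x) = lastCoord d x - f (firstCoords d x) :=
      lastCoord_straighten hd f x
    have hx' : f (firstCoords d x) < lastCoord d x := hx
    show 0 < lastCoord d (straighten d f x)
    rw [h1]; linarith
  · intro hy
    have hy' : 0 < lastCoord d y := hy
    refine ⟨straighten d (fun z => -f z) y, ?_, ?_⟩
    · show f (firstCoords d (straighten d (fun z => -f z) y))
        < lastCoord d (straighten d (fun z => -f z) y)
      rw [firstCoords_straighten, lastCoord_straighten hd]
      show f (firstCoords d y) < lastCoord d y - -f (firstCoords d y)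
      linarith
    · exact straighten_straighten (fun z => -f z) f (fun z => by ring) y

lemma isOpen_upperGraph (hd : 2 ≤ d) {f : Euc (d - 1) → ℝ} (hf : Continuous f) :
    IsOpen (upperGraph d f) := by
  have h1 : Continuous fun x : Euc d => f (firstCoords d x) := by
    simpa [Function.comp_def, P_apply] using hf.comp (P d).continuous
  have h2 : Continuous fun x : Euc d => lastCoord d x := by
    have he : (fun x : Euc d => lastCoord d x) = fun x : Euc d => x (lastIdx hd) :=
      funext fun x => lastCoord_eq hd x
    rw [he]
    exact (EuclideanSpace.proj (lastIdx hd) : Euc d →L[ℝ] ℝ).continuous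
  exact isOpen_lt h1 h2

lemma lipschitz_f (hd : 2 ≤ d) {f : Euc (d - 1) → ℝ} {ε : ℝ} (hf : ContDiff ℝ 1 f)
    (hε1 : ε ≤ 1) (hgrad : ∀ x', ‖fderiv ℝ f x'‖ ≤ ε) : LipschitzWith 1 f := by
  apply lipschitzWith_of_nnnorm_fderiv_le (hf.differentiable one_ne_zero)
  intro x
  rw [← NNReal.coe_le_coe]
  push_cast
  calc (‖fderiv ℝ f x‖₊ : ℝ) = ‖fderiv ℝ f x‖ := rfl
    _ ≤ ε := hgrad x
    _ ≤ 1 := hε1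

lemma lipschitz_straighten (hd : 2 ≤ d) {f : Euc (d - 1) → ℝ} {ε : ℝ} (hf : ContDiff ℝ 1 f)
    (hε1 : ε ≤ 1) (hgrad : ∀ x', ‖fderiv ℝ f x'‖ ≤ ε) :
    LipschitzWith 2 (straighten d f) := by
  have hflip := lipschitz_f hd hf hε1 hgrad
  apply LipschitzWith.of_dist_le_mul
  intro x y
  have hkey : straighten d f x - straighten d f y
      = (x - y) - (f (P d x) - f (P d y)) • Ed hd := by
    rw [straighten_eq hd, straighten_eq hd, sub_smul]
    abel
  rw [dist_eq_norm, hkey]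
  have h1 : ‖(f (P d x) - f (P d y)) • Ed hd‖ ≤ ‖x - y‖ := by
    rw [norm_smul, norm_Ed hd, mul_one]
    have h2 : ‖f (P d x) - f (P d y)‖ ≤ ‖P d x - P d y‖ := by
      have := hflip.dist_le_mul (P d x) (P d y)
      rw [dist_eq_norm, dist_eq_norm] at this
      simpa using this
    calc ‖f (P d x) - f (P d y)‖ ≤ ‖P d x - P d y‖ := h2
      _ = ‖P d (x - y)‖ := by rw [map_sub]
      _ ≤ ‖x - y‖ := norm_P_le _
  calc ‖(x - y) - (f (P d x) - f (P d y)) • Ed hd‖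
      ≤ ‖x - y‖ + ‖(f (P d x) - f (P d y)) • Ed hd‖ := norm_sub_le _ _
    _ ≤ ‖x - y‖ + ‖x - y‖ := by linarith
    _ = (2 : ℝ≥0) * dist x y := by rw [dist_eq_norm]; push_cast; ring

lemma lip_re {g : Euc d → ℂ} {L : ℝ≥0} (hg : LipschitzWith L g) :
    LipschitzWith L fun y => (g y).re := by
  apply LipschitzWith.of_dist_le_mul
  intro x y
  calc dist (g x).re (g y).re = |((g x) - (g y)).re| := by
        rw [Real.dist_eq, Complex.sub_re]
    _ ≤ ‖g x - g y‖ := Complex.abs_re_le_norm _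
    _ = dist (g x) (g y) := (Complex.dist_eq _ _).symm
    _ ≤ L * dist x y := hg.dist_le_mul x y

lemma lip_im {g : Euc d → ℂ} {L : ℝ≥0} (hg : LipschitzWith L g) :
    LipschitzWith L fun y => (g y).im := by
  apply LipschitzWith.of_dist_le_mul
  intro x y
  calc dist (g x).im (g y).im = |((g x) - (g y)).im| := by
        rw [Real.dist_eq, Complex.sub_im]
    _ ≤ ‖g x - g y‖ := Complex.abs_im_le_norm _
    _ = dist (g x) (g y) := (Complex.dist_eq _ _).symm
    _ ≤ L * dist x y := hg.dist_le_mul x y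

lemma gradSq_eq (g : Euc d → ℂ) (x : Euc d) :
    gradSqC d g x = ‖fderiv ℝ (fun y => (g y).re) x‖ ^ 2
      + ‖fderiv ℝ (fun y => (g y).im) x‖ ^ 2 := by
  have h : ∀ (u : Euc d → ℝ) (x : Euc d), ‖gradient u x‖ = ‖fderiv ℝ u x‖ := by
    intro u x
    rw [show gradient u x = (InnerProductSpace.toDual ℝ (Euc d)).symm (fderiv ℝ u x) from rfl,
      LinearIsometryEquiv.norm_map]
  unfold gradSqC
  rw [h, h]

lemma gradSq_nonneg (g : Euc d → ℂ) (x : Euc d) : 0 ≤ gradSqC d g x := by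
  rw [gradSq_eq]; positivity

lemma gradSq_le_lip {g : Euc d → ℂ} {L : ℝ≥0} (hg : LipschitzWith L g) (x : Euc d) :
    gradSqC d g x ≤ 2 * (L : ℝ) ^ 2 := by
  rw [gradSq_eq]
  have h1 : ‖fderiv ℝ (fun y => (g y).re) x‖ ≤ L := norm_fderiv_le_of_lipschitz ℝ (lip_re hg)
  have h2 : ‖fderiv ℝ (fun y => (g y).im) x‖ ≤ L := norm_fderiv_le_of_lipschitz ℝ (lip_im hg)
  have h3 : (0:ℝ) ≤ ‖fderiv ℝ (fun y => (g y).re) x‖ := norm_nonneg _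
  have h4 : (0:ℝ) ≤ ‖fderiv ℝ (fun y => (g y).im) x‖ := norm_nonneg _
  nlinarith

lemma gradSq_zero {g : Euc d → ℂ} {x : Euc d} (hx : ∀ᶠ y in nhds x, g y = 0) :
    gradSqC d g x = 0 := by
  rw [gradSq_eq]
  have hre : (fun y => (g y).re) =ᶠ[nhds x] (fun _ => (0:ℝ)) :=
    hx.mono fun y hy => by simp [hy]
  have him : (fun y => (g y).im) =ᶠ[nhds x] (fun _ => (0:ℝ)) :=
    hx.mono fun y hy => by simp [hy]
  rw [hre.fderiv_eq, him.fderiv_eq, fderiv_fun_const]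
  simp

lemma gradSq_measurable (g : Euc d → ℂ) : Measurable (gradSqC d g) := by
  have h : gradSqC d g = fun x => ‖fderiv ℝ (fun y => (g y).re) x‖ ^ 2
      + ‖fderiv ℝ (fun y => (g y).im) x‖ ^ 2 := funext fun x => gradSq_eq g x
  rw [h]
  exact (((measurable_fderiv ℝ _).norm.pow_const 2).add
    ((measurable_fderiv ℝ _).norm.pow_const 2))

lemma integrable_of_bound (G : Euc d → ℝ) (hGm : Measurable G) (Kc : Set (Euc d))
    (hKc : IsCompact Kc) (M : ℝ)
    (hb : ∀ x, |G x| ≤ Kc.indicator (fun _ => M) x) : Integrable G := by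
  have hint : Integrable (Kc.indicator fun _ => M) volume := by
    rw [integrable_indicator_iff hKc.isClosed.measurableSet]
    exact integrableOn_const hKc.measure_lt_top.ne
  exact hint.mono' hGm.aestronglyMeasurable
    (ae_of_all _ (fun x => by simpa [Real.norm_eq_abs] using hb x))

lemma comp_sq_bound {ε : ℝ} (hε0 : 0 ≤ ε) (hε1 : ε ≤ 1) (A : Euc d →L[ℝ] ℝ)
    (B : Euc d →L[ℝ] Euc d) (hB : ‖B - ContinuousLinearMap.id ℝ (Euc d)‖ ≤ ε) :
    |‖A.comp B‖ ^ 2 - ‖A‖ ^ 2| ≤ 3 * ε * ‖A‖ ^ 2 := by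
  have hBn : ‖B‖ ≤ 1 + ε := by
    calc ‖B‖ = ‖ContinuousLinearMap.id ℝ (Euc d) + (B - ContinuousLinearMap.id ℝ (Euc d))‖ := by
          rw [add_sub_cancel]
      _ ≤ ‖ContinuousLinearMap.id ℝ (Euc d)‖ + ‖B - ContinuousLinearMap.id ℝ (Euc d)‖ :=
          norm_add_le _ _
      _ ≤ 1 + ε := add_le_add ContinuousLinearMap.norm_id_le hB
  have h1 : ‖A.comp B‖ ≤ ‖A‖ * (1 + ε) := by
    calc ‖A.comp B‖ ≤ ‖A‖ * ‖B‖ := ContinuousLinearMap.opNorm_comp_le _ _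
      _ ≤ ‖A‖ * (1 + ε) := mul_le_mul_of_nonneg_left hBn (norm_nonneg _)
  have hkey : A.comp B - A.comp (B - ContinuousLinearMap.id ℝ (Euc d)) = A := by
    rw [← ContinuousLinearMap.comp_sub]
    simp
  have h2 : ‖A‖ ≤ ‖A.comp B‖ + ε * ‖A‖ := by
    calc ‖A‖ = ‖A.comp B - A.comp (B - ContinuousLinearMap.id ℝ (Euc d))‖ := by rw [hkey]
      _ ≤ ‖A.comp B‖ + ‖A.comp (B - ContinuousLinearMap.id ℝ (Euc d))‖ := norm_sub_le _ _
      _ ≤ ‖A.comp B‖ + ‖A‖ * ε := by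
          have := ContinuousLinearMap.opNorm_comp_le A (B - ContinuousLinearMap.id ℝ (Euc d))
          have h3 : ‖A.comp (B - ContinuousLinearMap.id ℝ (Euc d))‖ ≤ ‖A‖ * ε :=
            this.trans (mul_le_mul_of_nonneg_left hB (norm_nonneg _))
          linarith
      _ = ‖A.comp B‖ + ε * ‖A‖ := by ring
  have ha : (0:ℝ) ≤ ‖A‖ := norm_nonneg _
  have ht : (0:ℝ) ≤ ‖A.comp B‖ := norm_nonneg _
  have h3 : ‖A‖ * (1 - ε) ≤ ‖A.comp B‖ := by linarith
  have h4 : (‖A‖ * (1 - ε)) ^ 2 ≤ ‖A.comp B‖ ^ 2 :=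
    pow_le_pow_left₀ (mul_nonneg ha (by linarith)) h3 2
  have h5 : ‖A.comp B‖ ^ 2 ≤ (‖A‖ * (1 + ε)) ^ 2 := pow_le_pow_left₀ ht h1 2
  rw [abs_le]
  constructor
  · nlinarith [sq_nonneg ‖A‖, mul_nonneg hε0 (mul_nonneg (sub_nonneg.2 hε1) (mul_nonneg ha ha))]
  · nlinarith [sq_nonneg ‖A‖, mul_nonneg hε0 (mul_nonneg (sub_nonneg.2 hε1) (mul_nonneg ha ha))]

end StraightenAux

end StraightenAux

/-- **Straightening the boundary** (Lemma 4.1 of Frank–Geisinger): for a `C¹` graph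
function `f` with `sup|∇f| ≤ ε ≤ 1` and a Lipschitz compactly supported `w`,
the pullback `v = w ∘ (x ↦ (x', x_d - f(x')))` is Lipschitz on the region above the graph
and its Dirichlet integral differs from that of `w` by at most `Cε ∫|∇w|²`. -/
theorem straightening_dirichlet_estimate (d : ℕ) (hd : 2 ≤ d) :
    ∃ C : ℝ, 0 < C ∧ ∀ (ε : ℝ), 0 < ε → ε ≤ 1 →
      ∀ f : Euc (d - 1) → ℝ, ContDiff ℝ 1 f → (∀ x', ‖fderiv ℝ f x'‖ ≤ ε) →
      ∀ (w : Euc d → ℂ) (K : ℝ≥0), LipschitzWith K w → HasCompactSupport w →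
        (∃ K' : ℝ≥0, LipschitzOnWith K'
            (fun x => w (straighten d f x)) (upperGraph d f)) ∧
        |(∫ x in upperGraph d f, gradSqC d (fun y => w (straighten d f y)) x)
            - ∫ y in upperHalf d, gradSqC d w y|
          ≤ C * ε * ∫ y in upperHalf d, gradSqC d w y := by
  classical
  open StraightenAux in
  refine ⟨3, by norm_num, ?_⟩
  intro ε hε hε1 f hf hgrad w K hw hsupp
  have hε0 : (0:ℝ) ≤ ε := hε.le
  have hSlip : LipschitzWith 2 (straighten d f) :=
    StraightenAux.lipschitz_straighten hd hf hε1 hgrad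
  have hgradneg : ∀ x', ‖fderiv ℝ (fun z => -f z) x'‖ ≤ ε := by
    intro x'
    have h1 : fderiv ℝ (fun z => -f z) x' = -(fderiv ℝ f x') := fderiv_neg
    rw [h1, norm_neg]; exact hgrad x'
  have hTlip : LipschitzWith 2 (straighten d (fun z => -f z)) :=
    StraightenAux.lipschitz_straighten hd hf.neg hε1 hgradneg
  have hST : ∀ x, straighten d (fun z => -f z) (straighten d f x) = x :=
    fun x => StraightenAux.straighten_straighten f (fun z => -f z) (fun z => by ring) x
  have hTS : ∀ y, straighten d f (straighten d (fun z => -f z) y) = y :=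
    fun y => StraightenAux.straighten_straighten (fun z => -f z) f (fun z => by ring) y
  constructor
  · have h : LipschitzWith (K * 2) (fun x => w (straighten d f x)) := hw.comp hSlip
    exact ⟨K * 2, h.lipschitzOnWith⟩
  -- notation
  have hΩm : MeasurableSet (upperGraph d f) :=
    (StraightenAux.isOpen_upperGraph hd hf.continuous).measurableSet
  have hSD : ∀ x, HasFDerivAt (straighten d f) (StraightenAux.SD hd f x) x :=
    StraightenAux.hasFDerivAt_straighten hd hf
  have hTD : ∀ x, HasFDerivAt (straighten d (fun z => -f z))
      (StraightenAux.SD hd (fun z => -f z) x) x :=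
    StraightenAux.hasFDerivAt_straighten hd hf.neg
  -- change of variables
  have hCov : (∫ y in upperHalf d, gradSqC d w y)
      = ∫ x in upperGraph d f, gradSqC d w (straighten d f x) := by
    rw [← StraightenAux.image_straighten hd f,
      integral_image_eq_integral_abs_det_fderiv_smul volume hΩm
        (fun x _ => (hSD x).hasFDerivWithinAt) ((StraightenAux.straighten_injective f).injOn)]
    simp only [StraightenAux.det_SD, abs_one, one_smul]
  -- compact "support" set
  have hKc : IsCompact ((straighten d (fun z => -f z)) '' tsupport w) :=
    hsupp.image hTlip.continuous
  have hmemKc : ∀ x : Euc d, straighten d f x ∈ tsupport w →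
      x ∈ (straighten d (fun z => -f z)) '' tsupport w := by
    intro x hx
    exact ⟨straighten d f x, hx, hST x⟩
  -- integrability of GW ∘ S on Ω
  have hGWS_meas : Measurable (fun x => gradSqC d w (straighten d f x)) :=
    (StraightenAux.gradSq_measurable w).comp hSlip.continuous.measurable
  have hbound : ∀ x : Euc d, |gradSqC d w (straighten d f x)|
      ≤ ((straighten d (fun z => -f z)) '' tsupport w).indicator
          (fun _ => 2 * ((K : ℝ) * 2) ^ 2) x := by
    intro x
    by_cases hx : straighten d f x ∈ tsupport w
    · rw [Set.indicator_of_mem (hmemKc x hx)]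
      rw [abs_of_nonneg (StraightenAux.gradSq_nonneg _ _)]
      have := StraightenAux.gradSq_le_lip hw (straighten d f x)
      have hK0 : (0:ℝ) ≤ (K:ℝ) := K.coe_nonneg
      nlinarith
    · have hzero : gradSqC d w (straighten d f x) = 0 := by
        apply StraightenAux.gradSq_zero
        have hopen : IsOpen (tsupport w)ᶜ := (isClosed_tsupport w).isOpen_compl
        filter_upwards [hopen.mem_nhds hx] with y hy
        exact image_eq_zero_of_notMem_tsupport hy
      rw [hzero, abs_zero]
      exact Set.indicator_nonneg (fun _ _ => by positivity) x
  have hGWS_int : IntegrableOn (fun x => gradSqC d w (straighten d f x)) (upperGraph d f) :=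
    (StraightenAux.integrable_of_bound _ hGWS_meas _ hKc _ hbound).integrableOn
  -- integrability of GV on Ω
  have hvlip : LipschitzWith (K * 2) (fun y => w (straighten d f y)) := hw.comp hSlip
  have hGV_meas : Measurable (gradSqC d (fun y => w (straighten d f y))) :=
    StraightenAux.gradSq_measurable _
  have hboundV : ∀ x : Euc d, |gradSqC d (fun y => w (straighten d f y)) x|
      ≤ ((straighten d (fun z => -f z)) '' tsupport w).indicator
          (fun _ => 2 * ((K : ℝ) * 2) ^ 2) x := by
    intro x
    by_cases hx : straighten d f x ∈ tsupport w
    · rw [Set.indicator_of_mem (hmemKc x hx)]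
      rw [abs_of_nonneg (StraightenAux.gradSq_nonneg _ _)]
      have h1 := StraightenAux.gradSq_le_lip hvlip x
      have h2 : ((K * 2 : ℝ≥0) : ℝ) = (K : ℝ) * 2 := by push_cast; ring
      rw [h2] at h1
      exact h1
    · have hzero : gradSqC d (fun y => w (straighten d f y)) x = 0 := by
        apply StraightenAux.gradSq_zero
        have hopen : IsOpen ((straighten d f) ⁻¹' (tsupport w)ᶜ) :=
          (isClosed_tsupport w).isOpen_compl.preimage hSlip.continuous
        filter_upwards [hopen.mem_nhds hx] with y hy
        exact image_eq_zero_of_notMem_tsupport hy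
      rw [hzero, abs_zero]
      exact Set.indicator_nonneg (fun _ _ => by positivity) x
  have hGV_int : IntegrableOn (gradSqC d (fun y => w (straighten d f y))) (upperGraph d f) :=
    (StraightenAux.integrable_of_bound _ hGV_meas _ hKc _ hboundV).integrableOn
  -- a.e. differentiability of w at straighten points
  have hrad : ∀ᵐ y : Euc d, DifferentiableAt ℝ w y := hw.ae_differentiableAt
  have hNm : MeasurableSet {y : Euc d | DifferentiableAt ℝ w y}ᶜ :=
    (measurableSet_of_differentiableAt ℝ w).compl
  have hN0 : volume ({y : Euc d | DifferentiableAt ℝ w y}ᶜ) = 0 := by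
    rw [ae_iff] at hrad
    exact hrad
  have hTN0 : volume ((straighten d (fun z => -f z)) ''
      ({y : Euc d | DifferentiableAt ℝ w y}ᶜ)) = 0 := by
    rw [← lintegral_abs_det_fderiv_eq_addHaar_image volume hNm
      (fun x _ => (hTD x).hasFDerivWithinAt)
      ((StraightenAux.straighten_injective _).injOn)]
    simp only [StraightenAux.det_SD, abs_one, ENNReal.ofReal_one]
    rw [setLIntegral_one, hN0]
  have hpull : ∀ᵐ x : Euc d, DifferentiableAt ℝ w (straighten d f x) := by
    rw [ae_iff]
    apply measure_mono_null _ hTN0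
    intro x hx
    exact ⟨straighten d f x, hx, hST x⟩
  -- pointwise a.e. estimate
  have hpt : ∀ᵐ x : Euc d, |gradSqC d (fun y => w (straighten d f y)) x
      - gradSqC d w (straighten d f x)|
      ≤ 3 * ε * gradSqC d w (straighten d f x) := by
    filter_upwards [hpull] with x hx
    have hre : fderiv ℝ (fun y => (w (straighten d f y)).re) x
        = (fderiv ℝ (fun y => (w y).re) (straighten d f x)).comp (StraightenAux.SD hd f x) := by
      have h1 : DifferentiableAt ℝ (fun y : Euc d => (w y).re) (straighten d f x) :=
        (Complex.reCLM.differentiableAt).comp _ hx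
      exact (h1.hasFDerivAt.comp x (hSD x)).fderiv
    have him : fderiv ℝ (fun y => (w (straighten d f y)).im) x
        = (fderiv ℝ (fun y => (w y).im) (straighten d f x)).comp (StraightenAux.SD hd f x) := by
      have h1 : DifferentiableAt ℝ (fun y : Euc d => (w y).im) (straighten d f x) :=
        (Complex.imCLM.differentiableAt).comp _ hx
      exact (h1.hasFDerivAt.comp x (hSD x)).fderiv
    rw [StraightenAux.gradSq_eq, StraightenAux.gradSq_eq, hre, him]
    set A1 := fderiv ℝ (fun y => (w y).re) (straighten d f x)
    set A2 := fderiv ℝ (fun y => (w y).im) (straighten d f x)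
    set B := StraightenAux.SD hd f x
    have hB : ‖B - ContinuousLinearMap.id ℝ (Euc d)‖ ≤ ε :=
      StraightenAux.norm_SD_sub_id_le hd hgrad x
    have hb1 := StraightenAux.comp_sq_bound hε0 hε1 A1 B hB
    have hb2 := StraightenAux.comp_sq_bound hε0 hε1 A2 B hB
    have hsplit : ‖A1.comp B‖ ^ 2 + ‖A2.comp B‖ ^ 2 - (‖A1‖ ^ 2 + ‖A2‖ ^ 2)
        = (‖A1.comp B‖ ^ 2 - ‖A1‖ ^ 2) + (‖A2.comp B‖ ^ 2 - ‖A2‖ ^ 2) := by ring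
    rw [hsplit]
    calc |(‖A1.comp B‖ ^ 2 - ‖A1‖ ^ 2) + (‖A2.comp B‖ ^ 2 - ‖A2‖ ^ 2)|
        ≤ |‖A1.comp B‖ ^ 2 - ‖A1‖ ^ 2| + |‖A2.comp B‖ ^ 2 - ‖A2‖ ^ 2| := abs_add_le _ _
      _ ≤ 3 * ε * ‖A1‖ ^ 2 + 3 * ε * ‖A2‖ ^ 2 := add_le_add hb1 hb2
      _ = 3 * ε * (‖A1‖ ^ 2 + ‖A2‖ ^ 2) := by ring
  -- conclusion
  calc |(∫ x in upperGraph d f, gradSqC d (fun y => w (straighten d f y)) x)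
          - ∫ y in upperHalf d, gradSqC d w y|
      = |∫ x in upperGraph d f, (gradSqC d (fun y => w (straighten d f y)) x
          - gradSqC d w (straighten d f x))| := by
        rw [hCov, integral_sub hGV_int hGWS_int]
    _ ≤ ∫ x in upperGraph d f, |gradSqC d (fun y => w (straighten d f y)) x
          - gradSqC d w (straighten d f x)| := by
        simpa [Real.norm_eq_abs] using
          norm_integral_le_integral_norm (μ := volume.restrict (upperGraph d f))
            (fun x => gradSqC d (fun y => w (straighten d f y)) x
              - gradSqC d w (straighten d f x))
    _ ≤ ∫ x in upperGraph d f, 3 * ε * gradSqC d w (straighten d f x) :=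
        integral_mono_ae ((hGV_int.sub hGWS_int).abs) (hGWS_int.const_mul _)
          (ae_restrict_of_ae hpt)
    _ = 3 * ε * ∫ x in upperGraph d f, gradSqC d w (straighten d f x) :=
        integral_const_mul _ _
    _ = 3 * ε * ∫ y in upperHalf d, gradSqC d w y := by rw [hCov]
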